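/- Let w be a right-infinite word over a finite alphabet that is not eventually periodic, and suppose every letter of the alphabet occurs in w. In the monomial algebra A_w = k{Σ}/I (I generated by non-factors of w), if the first letter of w occurs at least twice in w, then A_w is a prime ring. -/

import Mathlib

/-- A monoid morphism applied to a word. -/
def applyM {α : Type*} (φ : α → List α) (u : List α) : List α := u.flatMap φ

/-- The block of `len` consecutive letters of `w` starting at position `i`. -/
def toListW {α : Type*} (w : ℕ → α) (i len : ℕ) : List α :=
  (List.range len).map fun k => w (i + k)

/-- `v` is a factor (subword) of the right-infinite word `w`. -/
def IsFactor {α : Type*} (v : List α) (w : ℕ → α) : Prop :=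
  ∃ i, toListW w i v.length = v

/-- `v` is a prefix of the right-infinite word `w`. -/
def IsPrefixW {α : Type*} (v : List α) (w : ℕ → α) : Prop :=
  toListW w 0 v.length = v

/-- `w` is eventually periodic. -/
def EventuallyPeriodic {α : Type*} (w : ℕ → α) : Prop :=
  ∃ N P : ℕ, 0 < P ∧ ∀ n : ℕ, N ≤ n → w (n + P) = w n

/-- The relation on the free algebra identifying with `0` every monomial
corresponding to a finite word that is not a factor of `w`. -/
def relOf (k : Type*) [Field k] {α : Type*} (w : ℕ → α) :
    FreeAlgebra k α → FreeAlgebra k α → Prop :=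
  fun p q => q = 0 ∧ ∃ v : List α, ¬ IsFactor v w ∧ p = (v.map (FreeAlgebra.ι k)).prod

/-- The monomial algebra `A_w = k{Σ}/I`. -/
abbrev Aw (k : Type*) [Field k] {α : Type*} (w : ℕ → α) : Type _ := RingQuot (relOf k w)


theorem toListW_length {α : Type*} (w : ℕ → α) (i l : ℕ) : (toListW w i l).length = l := by
  simp [toListW]

theorem toListW_append {α : Type*} (w : ℕ → α) (i l₁ l₂ : ℕ) :
    toListW w i (l₁ + l₂) = toListW w i l₁ ++ toListW w (i + l₁) l₂ := by
  simp only [toListW, List.range_add, List.map_append, List.map_map]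
  congr 1
  apply List.map_congr_left
  intro t _
  simp [Function.comp, Nat.add_assoc]

theorem isPrefixW_toListW {α : Type*} (w : ℕ → α) (l : ℕ) : IsPrefixW (toListW w 0 l) w := by
  simp [IsPrefixW, toListW_length]

theorem isPrefixW_iff {α : Type*} {v : List α} {w : ℕ → α} (h : IsPrefixW v w) :
    v = toListW w 0 v.length := h.symm

theorem prefix_unique {α : Type*} {u v : List α} {w : ℕ → α} (hu : IsPrefixW u w)
    (hv : IsPrefixW v w) (h : u.length ≤ v.length) : v = u ++ toListW w u.length (v.length - u.length) := by
  have := toListW_append w 0 u.length (v.length - u.length)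
  rw [Nat.add_sub_cancel' h] at this
  conv_lhs => rw [← hv]
  rw [this, hu, Nat.zero_add]

theorem toListW_eq_of_pointwise {α : Type*} {w : ℕ → α} {i j l : ℕ}
    (h : ∀ t, t < l → w (i + t) = w (j + t)) : toListW w i l = toListW w j l := by
  simp only [toListW]
  exact List.map_congr_left (fun t ht => h t (List.mem_range.mp ht))

theorem toListW_pointwise {α : Type*} {w : ℕ → α} {i j l : ℕ}
    (h : toListW w i l = toListW w j l) : ∀ t, t < l → w (i + t) = w (j + t) := by
  intro t ht
  have h1 : (toListW w i l)[t]?  = (toListW w j l)[t]? := by rw [h]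
  simpa [toListW, List.getElem?_map, List.getElem?_range, ht] using h1

theorem applyM_append {α : Type*} (φ : α → List α) (u v : List α) :
    applyM φ (u ++ v) = applyM φ u ++ applyM φ v := by
  simp [applyM]

theorem applyM_iter_append {α : Type*} (φ : α → List α) (n : ℕ) (u v : List α) :
    (applyM φ)^[n] (u ++ v) = (applyM φ)^[n] u ++ (applyM φ)^[n] v := by
  induction n generalizing u v with
  | zero => simp
  | succ n ih => simp [Function.iterate_succ_apply, applyM_append, ih]

theorem prefix_split {α : Type*} {w : ℕ → α} {A B : List α} (h : IsPrefixW (A ++ B) w) :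
    IsPrefixW A w ∧ toListW w A.length B.length = B := by
  unfold IsPrefixW at h ⊢
  rw [List.length_append, toListW_append, Nat.zero_add] at h
  have := List.append_inj h (by simp [toListW_length])
  exact ⟨this.1, this.2⟩

section Morphic
variable {α : Type*} {φ : α → List α} {b : α} {w : ℕ → α}
variable (hpref : ∀ n : ℕ, IsPrefixW ((applyM φ)^[n] [b]) w)
variable (hlen : ∀ N : ℕ, ∃ n : ℕ, N ≤ ((applyM φ)^[n] [b]).length)

include hpref hlen in
theorem prefix_applyM {u : List α} (hu : IsPrefixW u w) : IsPrefixW (applyM φ u) w := by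
  obtain ⟨n, hn⟩ := hlen u.length
  have hsplit := prefix_unique hu (hpref n) hn
  have hnext := hpref (n + 1)
  rw [Function.iterate_succ_apply', hsplit, applyM_append] at hnext
  exact (prefix_split hnext).1

include hpref hlen in
theorem prefix_applyM_iter (n : ℕ) {u : List α} (hu : IsPrefixW u w) :
    IsPrefixW ((applyM φ)^[n] u) w := by
  induction n with
  | zero => simpa
  | succ n ih => rw [Function.iterate_succ_apply']; exact prefix_applyM hpref hlen ih

end Morphic

section Glue
variable {α : Type*} {φ : α → List α} {b : α} {w : ℕ → α}
variable (hpref : ∀ n : ℕ, IsPrefixW ((applyM φ)^[n] [b]) w)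
variable (hlen : ∀ N : ℕ, ∃ n : ℕ, N ≤ ((applyM φ)^[n] [b]).length)
variable (hfirst : w 0 = b)
variable (htwice : ∃ i : ℕ, 0 < i ∧ w i = w 0)

include hpref hlen hfirst htwice in
theorem factor_glue {v v' : List α} (hv : IsFactor v w) (hv' : IsFactor v' w) :
    ∃ u : List α, IsFactor (v ++ u ++ v') w := by
  obtain ⟨iv, hiv⟩ := hv
  obtain ⟨iv', hiv'⟩ := hv'
  obtain ⟨i, hi0, hib⟩ := htwice
  obtain ⟨n, hn⟩ := hlen (max (iv + v.length) (iv' + v'.length))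
  set pn : List α := (applyM φ)^[n] [b] with hpn
  set L : ℕ := pn.length with hL
  -- the prefix of length i+1 of w, ending with b
  have hq1 : toListW w 0 (i + 1) = toListW w 0 i ++ [b] := by
    rw [toListW_append]
    congr 1
    simp [toListW, List.range_succ, hib, hfirst]
  have hq2 : toListW w 0 i = [b] ++ toListW w 1 (i - 1) := by
    have h1 : toListW w 0 1 = [b] := by simp [toListW, List.range_succ, hfirst]
    have h2 := toListW_append w 0 1 (i - 1)
    rw [show 1 + (i - 1) = i from by omega] at h2
    rw [h2, h1]
  -- apply the morphism n times to this prefix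
  have hP : IsPrefixW ((applyM φ)^[n] (toListW w 0 (i+1))) w := by
    apply prefix_applyM_iter hpref hlen
    exact isPrefixW_toListW w (i+1)
  rw [hq1, applyM_iter_append] at hP
  set A : List α := (applyM φ)^[n] (toListW w 0 i) with hA
  set j : ℕ := A.length with hj
  have hocc : toListW w j L = pn := (prefix_split hP).2
  -- j ≥ L
  have hjL : L ≤ j := by
    rw [hj, hA, hq2, applyM_iter_append]
    simp [hL, hpn]
  -- pointwise periodicity up to L
  have hw : ∀ t, t < L → w (j + t) = w t := by
    have : toListW w j L = toListW w 0 L := by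
      rw [hocc, hpn]; exact (hpref n).symm
    intro t ht
    simpa using toListW_pointwise this t ht
  have hnv : iv + v.length ≤ L := le_trans (le_max_left _ _) hn
  have hnv' : iv' + v'.length ≤ L := le_trans (le_max_right _ _) hn
  -- v' occurs at position j + iv'
  have hv'occ : toListW w (j + iv') v'.length = v' := by
    have heq : toListW w (j + iv') v'.length = toListW w iv' v'.length :=
      toListW_eq_of_pointwise (fun t ht => by
        rw [Nat.add_assoc]; exact hw (iv' + t) (by omega))
    rw [heq, hiv']
  -- assemble
  refine ⟨toListW w (iv + v.length) (j + iv' - (iv + v.length)), iv, ?_⟩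
  have hle : iv + v.length ≤ j + iv' := by omega
  have hlentot : (v ++ toListW w (iv + v.length) (j + iv' - (iv + v.length)) ++ v').length
      = v.length + (j + iv' - (iv + v.length)) + v'.length := by
    simp [toListW_length]
    omega
  rw [hlentot, toListW_append, toListW_append, hiv,
    show iv + (v.length + (j + iv' - (iv + v.length))) = j + iv' from by omega, hv'occ]

end Glue

theorem isFactor_of_append_left {α : Type*} {w : ℕ → α} {u v : List α}
    (h : IsFactor (u ++ v) w) : IsFactor u w := by
  obtain ⟨i, hi⟩ := h
  rw [List.length_append, toListW_append] at hi
  exact ⟨i, (List.append_inj hi (by simp [toListW_length])).1⟩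

theorem isFactor_of_append_right {α : Type*} {w : ℕ → α} {u v : List α}
    (h : IsFactor (u ++ v) w) : IsFactor v w := by
  obtain ⟨i, hi⟩ := h
  rw [List.length_append, toListW_append] at hi
  exact ⟨i + u.length, (List.append_inj hi (by simp [toListW_length])).2⟩

section Algebra

variable (k : Type*) [Field k] {α : Type*} (w : ℕ → α)

/-- The set of words that are *not* factors of `w`, as elements of the free monoid. -/
def NFset : Set (FreeMonoid α) := {v | ¬ IsFactor (FreeMonoid.toList v) w}

theorem nf_mul_left {g : FreeMonoid α} (hg : g ∈ NFset w) (h : FreeMonoid α) :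
    h * g ∈ NFset w := by
  intro hf
  exact hg (isFactor_of_append_right (u := FreeMonoid.toList h) hf)

theorem nf_mul_right {g : FreeMonoid α} (hg : g ∈ NFset w) (h : FreeMonoid α) :
    g * h ∈ NFset w := by
  intro hf
  exact hg (isFactor_of_append_left (v := FreeMonoid.toList h) hf)

/-- The span of the non-factor monomials inside the monoid algebra. -/
noncomputable def Ssub : Submodule k (MonoidAlgebra k (FreeMonoid α)) :=
  MonoidAlgebra.supported k k (NFset w)

theorem Ssub_mul_left {x : MonoidAlgebra k (FreeMonoid α)} (hx : x ∈ Ssub k w)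
    (y : MonoidAlgebra k (FreeMonoid α)) : y * x ∈ Ssub k w := by
  classical
  rw [Ssub, MonoidAlgebra.mem_supported] at hx ⊢
  intro m hm
  obtain ⟨a, ha, b, hb, rfl⟩ := Finset.mem_mul.mp (MonoidAlgebra.support_coeff_mul_subset y x hm)
  exact nf_mul_left w (hx hb) a

theorem Ssub_mul_right {x : MonoidAlgebra k (FreeMonoid α)} (hx : x ∈ Ssub k w)
    (y : MonoidAlgebra k (FreeMonoid α)) : x * y ∈ Ssub k w := by
  classical
  rw [Ssub, MonoidAlgebra.mem_supported] at hx ⊢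
  intro m hm
  obtain ⟨a, ha, b, hb, rfl⟩ := Finset.mem_mul.mp (MonoidAlgebra.support_coeff_mul_subset x y hm)
  exact nf_mul_right w (hx ha) b

/-- The ring congruence on the monoid algebra given by the two-sided ideal `Ssub`. -/
def rcOf : RingCon (MonoidAlgebra k (FreeMonoid α)) where
  r x y := x - y ∈ Ssub k w
  iseqv := ⟨fun x => by simp, fun h => by simpa using (Ssub k w).neg_mem h,
    fun h1 h2 => by simpa using (Ssub k w).add_mem h1 h2⟩
  add' := fun {a b c d} h1 h2 => by
    have := (Ssub k w).add_mem h1 h2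
    simpa [sub_add_sub_comm] using this
  mul' := fun {a b c d} h1 h2 => by
    show a * c - b * d ∈ Ssub k w
    have key : a * c - b * d = a * (c - d) + (a - b) * d := by noncomm_ring
    rw [key]
    exact (Ssub k w).add_mem (Ssub_mul_left k w h2 a) (Ssub_mul_right k w h1 d)

end Algebra

section Hom

variable (k : Type*) [Field k] {α : Type*} (w : ℕ → α)

theorem eqvMA_monomial (v : List α) :
    FreeAlgebra.equivMonoidAlgebraFreeMonoid ((v.map (FreeAlgebra.ι k)).prod) =
      MonoidAlgebra.single (FreeMonoid.ofList v) 1 := by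
  induction v with
  | nil =>
    simp only [List.map_nil, List.prod_nil, map_one]
    exact MonoidAlgebra.one_def
  | cons a t ih =>
    rw [List.map_cons, List.prod_cons, map_mul, ih, FreeMonoid.ofList_cons]
    have ha : FreeAlgebra.equivMonoidAlgebraFreeMonoid (FreeAlgebra.ι k a) =
        MonoidAlgebra.single (FreeMonoid.of a) 1 := by
      simp [FreeAlgebra.equivMonoidAlgebraFreeMonoid, MonoidAlgebra.of_apply]
    rw [ha, MonoidAlgebra.single_mul_single, one_mul]

theorem single_nf_mem_Ssub {v : FreeMonoid α} (hv : v ∈ NFset w) :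
    (MonoidAlgebra.single v (1 : k) : MonoidAlgebra k (FreeMonoid α)) ∈ Ssub k w := by
  rw [Ssub, MonoidAlgebra.mem_supported, MonoidAlgebra.coeff_single]
  intro m hm
  have := Finsupp.support_single_subset hm
  simp only [Finset.mem_singleton] at this
  subst this
  exact hv

/-- The quotient map to the concrete monomial algebra, out of `Aw`. -/
noncomputable def PhiHom : Aw k w →+* (rcOf k w).Quotient :=
  RingQuot.lift ⟨((rcOf k w).mk').comp
      (FreeAlgebra.equivMonoidAlgebraFreeMonoid : FreeAlgebra k α ≃ₐ[k] _).toAlgHom.toRingHom, by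
    rintro p q ⟨rfl, v, hv, rfl⟩
    simp only [RingHom.comp_apply, map_zero, AlgHom.toRingHom_eq_coe, RingHom.coe_coe,
      AlgEquiv.toAlgHom_eq_coe, AlgHom.coe_coe]
    erw [eqvMA_monomial]
    show ((MonoidAlgebra.single (FreeMonoid.ofList v) 1 : MonoidAlgebra k (FreeMonoid α)) :
        (rcOf k w).Quotient) = ((0 : MonoidAlgebra k (FreeMonoid α)) : (rcOf k w).Quotient)
    rw [RingCon.eq]
    show MonoidAlgebra.single (FreeMonoid.ofList v) (1:k) - 0 ∈ Ssub k w
    rw [sub_zero]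
    exact single_nf_mem_Ssub k w (by simpa [NFset] using hv)⟩

theorem PhiHom_mk (p : FreeAlgebra k α) :
    PhiHom k w (RingQuot.mkRingHom (relOf k w) p) =
      ((FreeAlgebra.equivMonoidAlgebraFreeMonoid p : MonoidAlgebra k (FreeMonoid α)) :
        (rcOf k w).Quotient) := by
  rw [PhiHom, RingQuot.lift_mkRingHom_apply]
  rfl

end Hom

section Rep

variable (k : Type*) [Field k] {α : Type*} (w : ℕ → α)

/-- The canonical linear map from the monoid algebra onto `Aw`. -/
noncomputable def Llin : MonoidAlgebra k (FreeMonoid α) →ₗ[k] Aw k w :=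
  (RingQuot.mkAlgHom k (relOf k w)).toLinearMap.comp
    (FreeAlgebra.equivMonoidAlgebraFreeMonoid.symm :
      MonoidAlgebra k (FreeMonoid α) ≃ₐ[k] FreeAlgebra k α).toLinearMap

theorem Llin_apply (P : MonoidAlgebra k (FreeMonoid α)) :
    Llin k w P = RingQuot.mkRingHom (relOf k w)
      (FreeAlgebra.equivMonoidAlgebraFreeMonoid.symm P) := by
  rw [Llin]
  simp only [LinearMap.comp_apply, AlgEquiv.toLinearMap_apply, AlgHom.toLinearMap_apply]
  rw [← RingQuot.mkAlgHom_coe k (relOf k w)]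
  rfl

theorem Llin_Ssub {P : MonoidAlgebra k (FreeMonoid α)} (hP : P ∈ Ssub k w) :
    Llin k w P = 0 := by
  have hle : Ssub k w ≤ LinearMap.ker (Llin k w) := by
    rw [Ssub, MonoidAlgebra.supported_eq_span_single, Submodule.span_le]
    rintro _ ⟨v, hv, rfl⟩
    simp only [SetLike.mem_coe, LinearMap.mem_ker]
    erw [Llin_apply k w]
    have hsymm : FreeAlgebra.equivMonoidAlgebraFreeMonoid.symm
        (MonoidAlgebra.single v (1:k)) =
        ((FreeMonoid.toList v).map (FreeAlgebra.ι k)).prod := by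
      rw [AlgEquiv.symm_apply_eq, eqvMA_monomial, FreeMonoid.ofList_toList]
    rw [hsymm]
    have hrel : relOf k w (((FreeMonoid.toList v).map (FreeAlgebra.ι k)).prod) 0 :=
      ⟨rfl, FreeMonoid.toList v, hv, rfl⟩
    rw [RingQuot.mkRingHom_rel hrel, map_zero]
  exact LinearMap.mem_ker.mp (hle hP)

theorem exists_rep (a : Aw k w) : ∃ P : MonoidAlgebra k (FreeMonoid α),
    (∀ m ∈ P.coeff.support, IsFactor (FreeMonoid.toList m) w) ∧ a = Llin k w P := by
  classical
  obtain ⟨p, rfl⟩ := RingQuot.mkRingHom_surjective (relOf k w) a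
  set P0 : MonoidAlgebra k (FreeMonoid α) := FreeAlgebra.equivMonoidAlgebraFreeMonoid p with hP0
  refine ⟨MonoidAlgebra.ofCoeff (P0.coeff.filter (fun m => IsFactor (FreeMonoid.toList m) w)), ?_, ?_⟩
  · intro m hm
    rw [MonoidAlgebra.coeff_ofCoeff, Finsupp.support_filter, Finset.mem_filter] at hm
    exact hm.2
  · have hsplit : MonoidAlgebra.ofCoeff (P0.coeff.filter (fun m => IsFactor (FreeMonoid.toList m) w))
        + MonoidAlgebra.ofCoeff (P0.coeff.filter (fun m => ¬ IsFactor (FreeMonoid.toList m) w))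
        = P0 := by
      rw [← MonoidAlgebra.ofCoeff_add, Finsupp.filter_pos_add_filter_neg]
    have hL0 : RingQuot.mkRingHom (relOf k w) p = Llin k w P0 := by
      rw [Llin_apply, hP0, AlgEquiv.symm_apply_apply]
    have hneg : MonoidAlgebra.ofCoeff (P0.coeff.filter (fun m => ¬ IsFactor (FreeMonoid.toList m) w)) ∈ Ssub k w := by
      rw [Ssub, MonoidAlgebra.mem_supported, MonoidAlgebra.coeff_ofCoeff]
      intro m hm
      have hm' : m ∈ Finset.filter (fun x => ¬ IsFactor (FreeMonoid.toList x) w) P0.coeff.support := by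
        exact_mod_cast hm
      exact (Finset.mem_filter.mp hm').2
    rw [hL0]
    conv_lhs => rw [← hsplit]
    rw [map_add, Llin_Ssub k w hneg, add_zero]

end Rep

section Coeff

variable {k : Type*} [Field k] {α : Type*} [DecidableEq (FreeMonoid α)]

theorem triple_expand (P P' : MonoidAlgebra k (FreeMonoid α)) (u : FreeMonoid α) :
    P * MonoidAlgebra.single u 1 * P' =
      P.coeff.sum fun a c => P'.coeff.sum fun a' c' => MonoidAlgebra.single (a * u * a') (c * c') := by
  classical
  have h1 : P * MonoidAlgebra.single u 1 = P.coeff.sum fun a c => MonoidAlgebra.single (a * u) c := by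
    rw [MonoidAlgebra.mul_def]
    refine Finsupp.sum_congr fun a ha => ?_
    rw [MonoidAlgebra.coeff_single, Finsupp.sum_single_index (by simp)]
    simp
  rw [h1, Finsupp.sum_mul]
  refine Finsupp.sum_congr fun a ha => ?_
  rw [MonoidAlgebra.mul_def, MonoidAlgebra.coeff_single, Finsupp.sum_single_index]
  simp

theorem triple_apply (P P' : MonoidAlgebra k (FreeMonoid α)) (u m : FreeMonoid α) :
    (P * MonoidAlgebra.single u 1 * P' : MonoidAlgebra k (FreeMonoid α)).coeff m =
      ∑ a ∈ P.coeff.support, ∑ a' ∈ P'.coeff.support, if a * u * a' = m then P.coeff a * P'.coeff a' else 0 := by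
  classical
  rw [triple_expand]
  simp only [Finsupp.sum]
  rw [MonoidAlgebra.coeff_sum, Finset.sum_apply']
  refine Finset.sum_congr rfl fun a ha => ?_
  rw [MonoidAlgebra.coeff_sum, Finset.sum_apply']
  refine Finset.sum_congr rfl fun a' ha' => ?_
  rw [MonoidAlgebra.coeff_single, Finsupp.single_apply]

theorem unique_decomp {α : Type*} {a v a' v' u : FreeMonoid α} (h : a * u * a' = v * u * v')
    (h1 : a.length ≤ v.length) (h2 : a'.length ≤ v'.length) : a = v ∧ a' = v' := by
  have hl : a.length + u.length + a'.length = v.length + u.length + v'.length := by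
    have := congrArg FreeMonoid.length h
    simpa [FreeMonoid.length_mul] using this
  have hlen : a.length = v.length := by omega
  have h' : FreeMonoid.toList a ++ (FreeMonoid.toList u ++ FreeMonoid.toList a') =
      FreeMonoid.toList v ++ (FreeMonoid.toList u ++ FreeMonoid.toList v') := by
    have := congrArg FreeMonoid.toList h
    simpa [FreeMonoid.toList_mul, List.append_assoc] using this
  have hinj := List.append_inj h' hlen
  refine ⟨FreeMonoid.toList.injective hinj.1, ?_⟩
  have := List.append_cancel_left hinj.2
  exact FreeMonoid.toList.injective this

theorem coeff_key {P P' : MonoidAlgebra k (FreeMonoid α)} {v v' : FreeMonoid α}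
    (hv : v ∈ P.coeff.support) (hv' : v' ∈ P'.coeff.support)
    (hvmax : ∀ g ∈ P.coeff.support, g.length ≤ v.length)
    (hv'max : ∀ g ∈ P'.coeff.support, g.length ≤ v'.length) (u : FreeMonoid α) :
    (P * MonoidAlgebra.single u 1 * P' : MonoidAlgebra k (FreeMonoid α)).coeff (v * u * v') = P.coeff v * P'.coeff v' := by
  classical
  rw [triple_apply]
  rw [Finset.sum_eq_single v]
  · rw [Finset.sum_eq_single v']
    · simp
    · intro a' ha' hne
      rw [if_neg]
      intro hEq
      exact hne (unique_decomp hEq (le_refl _) (hv'max a' ha')).2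
    · intro habs
      exact absurd hv' habs
  · intro a ha hne
    refine Finset.sum_eq_zero fun a' ha' => ?_
    rw [if_neg]
    intro hEq
    exact hne (unique_decomp hEq (hvmax a ha) (hv'max a' ha')).1
  · intro habs
    exact absurd hv habs

end Coeff

theorem rcOf_iff (k : Type*) [Field k] {α : Type*} (w : ℕ → α)
    (x y : MonoidAlgebra k (FreeMonoid α)) : rcOf k w x y ↔ x - y ∈ Ssub k w := Iff.rfl

theorem stmt18 (k : Type*) [Field k] {α : Type*} [Fintype α]
    (φ : α → List α) (b : α) (x : List α)
    (hx : x ≠ []) (hb : φ b = b :: x)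
    (w : ℕ → α)
    (hpref : ∀ n : ℕ, IsPrefixW ((applyM φ)^[n] [b]) w)
    (hlen : ∀ N : ℕ, ∃ n : ℕ, N ≤ ((applyM φ)^[n] [b]).length)
    (hfirst : w 0 = b)
    (hnp : ¬ EventuallyPeriodic w)
    (hocc : ∀ a : α, ∃ i : ℕ, w i = a)
    (htwice : ∃ i : ℕ, 0 < i ∧ w i = w 0) :
    -- `A_w` is a prime ring
    ∀ a c : Aw k w, (∀ r : Aw k w, a * r * c = 0) → a = 0 ∨ c = 0 := by
  intro a c h
  by_contra hac
  push_neg at hac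
  obtain ⟨ha, hc⟩ := hac
  classical
  obtain ⟨P, hPfac, rfl⟩ := exists_rep k w a
  obtain ⟨P', hP'fac, rfl⟩ := exists_rep k w c
  have hP : P ≠ 0 := fun h0 => ha (by rw [h0, map_zero])
  have hP' : P' ≠ 0 := fun h0 => hc (by rw [h0, map_zero])
  obtain ⟨v, hv, hvmax⟩ := Finset.exists_max_image P.coeff.support
    (fun m => FreeMonoid.length m) (Finsupp.support_nonempty_iff.mpr (by simpa using hP))
  obtain ⟨v', hv', hv'max⟩ := Finset.exists_max_image P'.coeff.support
    (fun m => FreeMonoid.length m) (Finsupp.support_nonempty_iff.mpr (by simpa using hP'))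
  obtain ⟨u0, hu0⟩ := factor_glue hpref hlen hfirst htwice (hPfac v hv) (hP'fac v' hv')
  set u : FreeMonoid α := FreeMonoid.ofList u0 with hu
  set m : FreeMonoid α := v * u * v' with hm
  have hmfac : IsFactor (FreeMonoid.toList m) w := by
    simpa [hm, FreeMonoid.toList_mul, hu, FreeMonoid.toList_ofList] using hu0
  have hcoeff := coeff_key hv hv' hvmax hv'max u
  have hne : P.coeff v * P'.coeff v' ≠ 0 :=
    mul_ne_zero (Finsupp.mem_support_iff.mp hv) (Finsupp.mem_support_iff.mp hv')
  have h0 := h (Llin k w (MonoidAlgebra.single u 1))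
  have hprod : Llin k w P * Llin k w (MonoidAlgebra.single u 1) * Llin k w P' =
      Llin k w (P * MonoidAlgebra.single u 1 * P') := by
    simp only [Llin_apply k w, map_mul]
  rw [hprod] at h0
  have hPhi := congrArg (PhiHom k w) h0
  rw [map_zero] at hPhi
  rw [Llin_apply k w, PhiHom_mk, AlgEquiv.apply_symm_apply] at hPhi
  have hmem : P * MonoidAlgebra.single u 1 * P' ∈ Ssub k w := by
    have h2 : ((P * MonoidAlgebra.single u 1 * P' : MonoidAlgebra k (FreeMonoid α)) :
        (rcOf k w).Quotient) = ((0 : MonoidAlgebra k (FreeMonoid α)) : (rcOf k w).Quotient) :=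
      hPhi
    have h3 := (RingCon.eq (rcOf k w)).mp h2
    rw [rcOf_iff, sub_zero] at h3
    exact h3
  rw [Ssub, MonoidAlgebra.mem_supported] at hmem
  have hsupp : m ∈ (P * MonoidAlgebra.single u 1 * P').coeff.support := by
    rw [Finsupp.mem_support_iff]
    rw [hm, hcoeff]
    exact hne
  exact (hmem hsupp) hmfac
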